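/- Let G be a group with a measure-preserving action ρ on a probability space (X,ν), S ⊆ G a finite symmetric subset containing the identity, and Γ = ⟨S⟩ the subgroup generated by S. Then the restriction ρ|_Γ is expanding in measure if and only if there exists ε > 0 such that (S, ε) is a Kazhdan pair for the unitary representation π_ρ : G ↷ L²_0(X). -/

import Mathlib

open MeasureTheory Pointwise Filter
open scoped ENNReal NNReal

set_option linter.unusedSectionVars false

section aux
variable {X : Type*} [MeasurableSpace X] {ν : Measure X}

lemma eLpNorm_two_eq (f : X → ℝ) :
    eLpNorm f 2 ν = (∫⁻ x, (‖f x‖₊ : ℝ≥0∞) ^ (2:ℝ) ∂ν) ^ (1/2 : ℝ) := by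
  rw [eLpNorm_eq_lintegral_rpow_enorm_toReal two_ne_zero ENNReal.ofNat_ne_top]
  simp only [enorm_eq_nnnorm]
  norm_num

lemma enorm_sq_eq (a : ℝ) : (‖a‖₊ : ℝ≥0∞) ^ (2:ℝ) = ENNReal.ofReal (a ^ 2) := by
  rw [← enorm_eq_nnnorm, ← ofReal_norm_eq_enorm, Real.norm_eq_abs,
    ENNReal.ofReal_rpow_of_nonneg (abs_nonneg a) (by norm_num)]
  congr 1
  rw [show (2:ℝ) = ((2:ℕ):ℝ) by norm_num, Real.rpow_natCast, sq_abs]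

lemma exists_median (f : X → ℝ) (hf : Measurable f) [IsProbabilityMeasure ν] :
    ∃ m : ℝ, ν {x | m < f x} ≤ 1/2 ∧ ν {x | f x < m} ≤ 1/2 := by
  set T : Set ℝ := {t | ν {x | t < f x} ≤ 1/2} with hT
  have mono : ∀ t t' : ℝ, t ≤ t' → t ∈ T → t' ∈ T := by
    intro t t' htt' ht
    exact le_trans (measure_mono (fun x hx => lt_of_le_of_lt htt' hx)) ht
  have hne : T.Nonempty := by
    have h1 : Tendsto (fun n : ℕ => ν {x | (n:ℝ) < f x}) atTop
        (nhds (ν (⋂ n : ℕ, {x | (n:ℝ) < f x}))) := by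
      refine tendsto_measure_iInter_atTop
        (fun n => ((measurableSet_lt measurable_const hf).nullMeasurableSet)) ?_ ⟨0, measure_ne_top ν _⟩
      intro n m hnm x hx
      simp only [Set.mem_setOf_eq] at hx ⊢
      exact lt_of_le_of_lt (Nat.cast_le.mpr hnm) hx
    have h2 : (⋂ n : ℕ, {x | (n:ℝ) < f x}) = ∅ := by
      ext x
      simp only [Set.mem_iInter, Set.mem_setOf_eq, Set.mem_empty_iff_false, iff_false]
      intro h
      obtain ⟨n, hn⟩ := exists_nat_gt (f x)
      exact absurd (h n) (not_lt.mpr hn.le)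
    rw [h2, measure_empty] at h1
    have := h1.eventually_lt_const (by norm_num : (0:ℝ≥0∞) < 1/2)
    obtain ⟨n, hn⟩ := this.exists
    exact ⟨n, hn.le⟩
  have hbdd : BddBelow T := by
    have h1 : Tendsto (fun n : ℕ => ν {x | -(n:ℝ) < f x}) atTop
        (nhds (ν (⋃ n : ℕ, {x | -(n:ℝ) < f x}))) := by
      refine tendsto_measure_iUnion_atTop ?_
      intro n m hnm x hx
      simp only [Set.mem_setOf_eq] at hx ⊢
      have : -(m:ℝ) ≤ -(n:ℝ) := neg_le_neg (Nat.cast_le.mpr hnm)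
      linarith
    have h2 : (⋃ n : ℕ, {x | -(n:ℝ) < f x}) = Set.univ := by
      ext x
      simp only [Set.mem_iUnion, Set.mem_setOf_eq, Set.mem_univ, iff_true]
      obtain ⟨n, hn⟩ := exists_nat_gt (-(f x))
      exact ⟨n, by linarith⟩
    rw [h2, measure_univ] at h1
    have := h1.eventually_const_lt (by norm_num : (1/2 : ℝ≥0∞) < 1)
    obtain ⟨n, hn⟩ := this.exists
    refine ⟨-(n:ℝ), fun t ht => ?_⟩
    by_contra hc
    push_neg at hc
    have : ν {x | -(n:ℝ) < f x} ≤ 1/2 := mono t _ hc.le ht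
    exact absurd this (not_le.mpr hn)
  set m := sInf T with hm
  refine ⟨m, ?_, ?_⟩
  · have hunion : {x | m < f x} = ⋃ n : ℕ, {x | m + 1/(n+1) < f x} := by
      ext x
      simp only [Set.mem_iUnion, Set.mem_setOf_eq]
      constructor
      · intro h
        obtain ⟨n, hn⟩ := exists_nat_one_div_lt (sub_pos.mpr h)
        exact ⟨n, by push_cast at hn ⊢; linarith⟩
      · intro ⟨n, hn⟩
        have : (0:ℝ) < 1/(n+1) := by positivity
        linarith
    rw [hunion]
    have hmono : Monotone (fun n : ℕ => {x | m + 1/((n:ℝ)+1) < f x}) := by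
      intro n k hnk x hx
      simp only [Set.mem_setOf_eq] at hx ⊢
      have h1 : (1:ℝ)/((k:ℝ)+1) ≤ 1/((n:ℝ)+1) := by
        apply one_div_le_one_div_of_le (by positivity)
        push_cast; exact_mod_cast add_le_add_left (Nat.cast_le.mpr hnk) 1
      linarith
    rw [hmono.measure_iUnion]
    refine iSup_le fun n => ?_
    have : m < m + 1/((n:ℝ)+1) := by
      have : (0:ℝ) < 1/((n:ℝ)+1) := by positivity
      linarith
    obtain ⟨t, htT, htlt⟩ := (csInf_lt_iff hbdd hne).mp this
    exact mono t _ htlt.le htT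
  · have hunion : {x | f x < m} = ⋃ n : ℕ, {x | f x < m - 1/(n+1)} := by
      ext x
      simp only [Set.mem_iUnion, Set.mem_setOf_eq]
      constructor
      · intro h
        obtain ⟨n, hn⟩ := exists_nat_one_div_lt (sub_pos.mpr h)
        exact ⟨n, by push_cast at hn ⊢; linarith⟩
      · intro ⟨n, hn⟩
        have : (0:ℝ) < 1/(n+1) := by positivity
        linarith
    rw [hunion]
    have hmono : Monotone (fun n : ℕ => {x | f x < m - 1/((n:ℝ)+1)}) := by
      intro n k hnk x hx
      simp only [Set.mem_setOf_eq] at hx ⊢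
      have h1 : (1:ℝ)/((k:ℝ)+1) ≤ 1/((n:ℝ)+1) := by
        apply one_div_le_one_div_of_le (by positivity)
        push_cast; exact_mod_cast add_le_add_left (Nat.cast_le.mpr hnk) 1
      linarith
    rw [hmono.measure_iUnion]
    refine iSup_le fun n => ?_
    have hnotT : (m - 1/((n:ℝ)+1)) ∉ T := by
      intro hc
      have : m ≤ m - 1/((n:ℝ)+1) := csInf_le hbdd hc
      have h0 : (0:ℝ) < 1/((n:ℝ)+1) := by positivity
      linarith
    have hgt : 1/2 < ν {x | m - 1/((n:ℝ)+1) < f x} := not_le.mp hnotT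
    have hcompl : {x | f x < m - 1/((n:ℝ)+1)} ⊆ {x | m - 1/((n:ℝ)+1) < f x}ᶜ := by
      intro x hx
      simp only [Set.mem_compl_iff, Set.mem_setOf_eq, not_lt] at hx ⊢
      exact hx.le
    refine le_trans (measure_mono hcompl) ?_
    rw [measure_compl (measurableSet_lt measurable_const hf) (measure_ne_top ν _), measure_univ]
    rw [tsub_le_iff_right]
    calc (1:ℝ≥0∞) = 1/2 + 1/2 := (ENNReal.add_halves 1).symm
    _ ≤ 1/2 + ν {a | m - 1/((n:ℝ)+1) < f a} := by exact add_le_add_right hgt.le _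

variable {X : Type*} [MeasurableSpace X] {ν : Measure X}

lemma smul_set_eq_preimage {G : Type*} [Group G] [MulAction G X] (s : G) (A : Set X) :
    s • A = (fun x => s⁻¹ • x) ⁻¹' A := by
  ext x; simp [Set.mem_smul_set_iff_inv_smul_mem]

lemma rpow_half_sq (x : ℝ≥0∞) : (x ^ (2:ℕ)) ^ (1/2:ℝ) = x := by
  rw [← ENNReal.rpow_natCast x 2, ← ENNReal.rpow_mul]; norm_num

end aux

set_option maxHeartbeats 2000000 in
theorem hard_dir
    {G X : Type*} [Group G] [MulAction G X] [MeasurableSpace X]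
    (ν : Measure X) [IsProbabilityMeasure ν]
    (hmp : ∀ g : G, MeasurePreserving (fun x => g • x) ν ν)
    (S : Finset G) (hS1 : (1 : G) ∈ S) (hSsymm : ∀ s ∈ S, s⁻¹ ∈ S)
    (α : ℝ) (hα : 0 < α)
    (hexp : ∀ A : Set X, MeasurableSet A → ν A ≤ 1 / 2 →
        ENNReal.ofReal (1 + α) * ν A ≤ ν (⋃ s ∈ S, s • A)) :
    ∃ ε : ℝ, 0 < ε ∧ ¬ ∃ f : X → ℝ,
          MemLp f 2 ν ∧ (∫ x, f x ∂ν = 0) ∧ eLpNorm f 2 ν ≠ 0 ∧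
          ∀ s ∈ S, eLpNorm (fun x => f (s⁻¹ • x) - f x) 2 ν
            ≤ ENNReal.ofReal ε * eLpNorm f 2 ν := by
  have hcard : 0 < (S.card : ℝ) := by
    exact_mod_cast Finset.card_pos.mpr ⟨1, hS1⟩
  refine ⟨α / (8 * S.card), by positivity, ?_⟩
  set ε : ℝ := α / (8 * S.card) with hεdef
  have hε : 0 < ε := by positivity
  rintro ⟨f₀, hf₀Lp, hf₀int, hf₀ne, hf₀bd⟩
  -- replace f₀ by a measurable representative f
  have hsm := hf₀Lp.aestronglyMeasurable
  set f : X → ℝ := hsm.mk f₀ with hfdef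
  have hfm : Measurable f := hsm.stronglyMeasurable_mk.measurable
  have hfe : f₀ =ᵐ[ν] f := hsm.ae_eq_mk
  have hfLp : MemLp f 2 ν := hf₀Lp.ae_eq hfe
  have hfint : ∫ x, f x ∂ν = 0 := by rw [← integral_congr_ae hfe]; exact hf₀int
  have hfne : eLpNorm f 2 ν ≠ 0 := by rw [← eLpNorm_congr_ae hfe]; exact hf₀ne
  have hfbd : ∀ s ∈ S, eLpNorm (fun x => f (s⁻¹ • x) - f x) 2 ν
      ≤ ENNReal.ofReal ε * eLpNorm f 2 ν := by
    intro s hs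
    have hcomp : (fun x => f₀ (s⁻¹ • x)) =ᵐ[ν] fun x => f (s⁻¹ • x) :=
      (hmp s⁻¹).quasiMeasurePreserving.ae_eq_comp hfe
    rw [← eLpNorm_congr_ae (show (fun x => f₀ (s⁻¹ • x) - f₀ x) =ᵐ[ν] fun x => f (s⁻¹ • x) - f x from hcomp.sub hfe), ← eLpNorm_congr_ae hfe]
    exact hf₀bd s hs
  clear hf₀bd hf₀ne hf₀int hf₀Lp hfe
  -- median
  obtain ⟨m, hm1, hm2⟩ := exists_median (ν := ν) f hfm
  -- the two halves
  have key : ∃ g : X → ℝ, Measurable g ∧ (∀ x, 0 ≤ g x) ∧ ν {x | 0 < g x} ≤ 1/2 ∧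
      (∫⁻ x, (‖f x‖₊ : ℝ≥0∞) ^ (2:ℝ) ∂ν) ≤ 2 * ∫⁻ x, (‖g x‖₊ : ℝ≥0∞) ^ (2:ℝ) ∂ν ∧
      Integrable (fun x => g x ^ 2) ν ∧
      (∀ s : G, ∀ x : X, |g (s⁻¹ • x) - g x| ≤ |f (s⁻¹ • x) - f x|) := by
    set gp : X → ℝ := fun x => max (f x - m) 0 with hgp
    set gn : X → ℝ := fun x => max (m - f x) 0 with hgn
    have hgp_meas : Measurable gp := (hfm.sub measurable_const).max measurable_const
    have hgn_meas : Measurable gn := (measurable_const.sub hfm).max measurable_const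
    have hgp_nn : ∀ x, 0 ≤ gp x := fun x => le_max_right _ _
    have hgn_nn : ∀ x, 0 ≤ gn x := fun x => le_max_right _ _
    -- integrability of (f - m)^2
    have hsq : Integrable (fun x => (f x - m)^2) ν := by
      have h1 : Integrable (fun x => f x^2 - 2*m*f x + m^2) ν :=
        (hfLp.integrable_sq.sub ((hfLp.integrable one_le_two).const_mul (2*m))).add
          (integrable_const _)
      refine h1.congr (Filter.Eventually.of_forall fun x => ?_)
      ring
    have hIsq : ∫ x, (f x - m)^2 ∂ν = (∫ x, f x^2 ∂ν) + m^2 := by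
      have hi2 : Integrable (fun x => 2*m*f x) ν := (hfLp.integrable one_le_two).const_mul (2*m)
      have hi1 : Integrable (fun x => f x^2 - 2*m*f x) ν := hfLp.integrable_sq.sub hi2
      have e1 : ∫ x, (f x - m)^2 ∂ν = ∫ x, (f x^2 - 2*m*f x) + m^2 ∂ν :=
        integral_congr_ae (Filter.Eventually.of_forall fun x => by ring)
      have e2 : ∫ x, (f x^2 - 2*m*f x) + m^2 ∂ν
          = (∫ x, f x^2 - 2*m*f x ∂ν) + ∫ _x, m^2 ∂ν := integral_add hi1 (integrable_const _)
      have e3 : ∫ x, f x^2 - 2*m*f x ∂ν = (∫ x, f x^2 ∂ν) - ∫ x, 2*m*f x ∂ν :=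
        integral_sub hfLp.integrable_sq hi2
      have e4 : ∫ x, 2*m*f x ∂ν = 2*m* ∫ x, f x ∂ν := integral_const_mul _ _
      rw [e1, e2, e3, e4, hfint, integral_const]
      simp
    have hsplit : ∀ x, gp x^2 + gn x^2 = (f x - m)^2 := by
      intro x
      rcases le_total m (f x) with h | h
      · rw [hgp, hgn]
        simp only
        rw [max_eq_left (by linarith), max_eq_right (by linarith)]
        ring
      · rw [hgp, hgn]
        simp only
        rw [max_eq_right (by linarith), max_eq_left (by linarith)]
        ring
    have hgp_int2 : Integrable (fun x => gp x^2) ν := by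
      refine hsq.mono (hgp_meas.pow_const 2).aestronglyMeasurable
        (Filter.Eventually.of_forall fun x => ?_)
      rw [Real.norm_eq_abs, Real.norm_eq_abs, abs_of_nonneg (sq_nonneg _),
        abs_of_nonneg (sq_nonneg _)]
      nlinarith [hsplit x, sq_nonneg (gn x)]
    have hgn_int2 : Integrable (fun x => gn x^2) ν := by
      refine hsq.mono (hgn_meas.pow_const 2).aestronglyMeasurable
        (Filter.Eventually.of_forall fun x => ?_)
      rw [Real.norm_eq_abs, Real.norm_eq_abs, abs_of_nonneg (sq_nonneg _),
        abs_of_nonneg (sq_nonneg _)]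
      nlinarith [hsplit x, sq_nonneg (gp x)]
    have hIsplit : ∫ x, (f x - m)^2 ∂ν = (∫ x, gp x^2 ∂ν) + ∫ x, gn x^2 ∂ν := by
      rw [← integral_add hgp_int2 hgn_int2]
      exact integral_congr_ae (Filter.Eventually.of_forall fun x => (hsplit x).symm)
    -- lintegral versions
    have hLf_eq : (∫⁻ x, (‖f x‖₊ : ℝ≥0∞) ^ (2:ℝ) ∂ν) = ENNReal.ofReal (∫ x, f x^2 ∂ν) := by
      rw [ofReal_integral_eq_lintegral_ofReal hfLp.integrable_sq
        (Filter.Eventually.of_forall fun x => sq_nonneg _)]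
      exact lintegral_congr fun x => enorm_sq_eq _
    have hLgp_eq : (∫⁻ x, (‖gp x‖₊ : ℝ≥0∞) ^ (2:ℝ) ∂ν) = ENNReal.ofReal (∫ x, gp x^2 ∂ν) := by
      rw [ofReal_integral_eq_lintegral_ofReal hgp_int2
        (Filter.Eventually.of_forall fun x => sq_nonneg _)]
      exact lintegral_congr fun x => enorm_sq_eq _
    have hLgn_eq : (∫⁻ x, (‖gn x‖₊ : ℝ≥0∞) ^ (2:ℝ) ∂ν) = ENNReal.ofReal (∫ x, gn x^2 ∂ν) := by
      rw [ofReal_integral_eq_lintegral_ofReal hgn_int2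
        (Filter.Eventually.of_forall fun x => sq_nonneg _)]
      exact lintegral_congr fun x => enorm_sq_eq _
    have hsum : (∫⁻ x, (‖f x‖₊ : ℝ≥0∞) ^ (2:ℝ) ∂ν)
        ≤ (∫⁻ x, (‖gp x‖₊ : ℝ≥0∞) ^ (2:ℝ) ∂ν) + ∫⁻ x, (‖gn x‖₊ : ℝ≥0∞) ^ (2:ℝ) ∂ν := by
      rw [hLf_eq, hLgp_eq, hLgn_eq, ← ENNReal.ofReal_add (integral_nonneg fun x => sq_nonneg _)
        (integral_nonneg fun x => sq_nonneg _), ← hIsplit, hIsq]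
      exact ENNReal.ofReal_le_ofReal (by nlinarith [sq_nonneg m])
    -- level sets
    have hgp_level : ν {x | 0 < gp x} ≤ 1/2 := by
      have : {x | 0 < gp x} = {x | m < f x} := by
        ext x; simp [hgp, lt_max_iff, sub_pos]
      rw [this]; exact hm1
    have hgn_level : ν {x | 0 < gn x} ≤ 1/2 := by
      have : {x | 0 < gn x} = {x | f x < m} := by
        ext x; simp [hgn, lt_max_iff, sub_pos]
      rw [this]; exact hm2
    -- Lipschitz
    have hgp_lip : ∀ (s : G) (x : X), |gp (s⁻¹ • x) - gp x| ≤ |f (s⁻¹ • x) - f x| := by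
      intro s x
      have := abs_max_sub_max_le_abs (f (s⁻¹ • x) - m) (f x - m) 0
      rwa [sub_sub_sub_cancel_right] at this
    have hgn_lip : ∀ (s : G) (x : X), |gn (s⁻¹ • x) - gn x| ≤ |f (s⁻¹ • x) - f x| := by
      intro s x
      have h1 := abs_max_sub_max_le_abs (m - f (s⁻¹ • x)) (m - f x) 0
      have h2 : (m - f (s⁻¹ • x)) - (m - f x) = -(f (s⁻¹ • x) - f x) := by ring
      rw [h2, abs_neg] at h1
      exact h1
    -- choose the bigger half
    rcases le_total (∫⁻ x, (‖gp x‖₊ : ℝ≥0∞) ^ (2:ℝ) ∂ν)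
        (∫⁻ x, (‖gn x‖₊ : ℝ≥0∞) ^ (2:ℝ) ∂ν) with h | h
    · refine ⟨gn, hgn_meas, hgn_nn, hgn_level, ?_, hgn_int2, hgn_lip⟩
      calc (∫⁻ x, (‖f x‖₊ : ℝ≥0∞) ^ (2:ℝ) ∂ν)
          ≤ (∫⁻ x, (‖gp x‖₊ : ℝ≥0∞) ^ (2:ℝ) ∂ν) + ∫⁻ x, (‖gn x‖₊ : ℝ≥0∞) ^ (2:ℝ) ∂ν := hsum
        _ ≤ (∫⁻ x, (‖gn x‖₊ : ℝ≥0∞) ^ (2:ℝ) ∂ν) + ∫⁻ x, (‖gn x‖₊ : ℝ≥0∞) ^ (2:ℝ) ∂ν :=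
            add_le_add_left h _
        _ = 2 * ∫⁻ x, (‖gn x‖₊ : ℝ≥0∞) ^ (2:ℝ) ∂ν := (two_mul _).symm
    · refine ⟨gp, hgp_meas, hgp_nn, hgp_level, ?_, hgp_int2, hgp_lip⟩
      calc (∫⁻ x, (‖f x‖₊ : ℝ≥0∞) ^ (2:ℝ) ∂ν)
          ≤ (∫⁻ x, (‖gp x‖₊ : ℝ≥0∞) ^ (2:ℝ) ∂ν) + ∫⁻ x, (‖gn x‖₊ : ℝ≥0∞) ^ (2:ℝ) ∂ν := hsum
        _ ≤ (∫⁻ x, (‖gp x‖₊ : ℝ≥0∞) ^ (2:ℝ) ∂ν) + ∫⁻ x, (‖gp x‖₊ : ℝ≥0∞) ^ (2:ℝ) ∂ν :=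
            add_le_add_right h _
        _ = 2 * ∫⁻ x, (‖gp x‖₊ : ℝ≥0∞) ^ (2:ℝ) ∂ν := (two_mul _).symm
  obtain ⟨g, hg_meas, hg_nonneg, hg_level, hg_Lf, hg_int2, hg_lip⟩ := key
  set Lf : ℝ≥0∞ := ∫⁻ x, (‖f x‖₊ : ℝ≥0∞) ^ (2:ℝ) ∂ν with hLfdef
  set Lg : ℝ≥0∞ := ∫⁻ x, (‖g x‖₊ : ℝ≥0∞) ^ (2:ℝ) ∂ν with hLgdef
  have hLg_eq : Lg = ENNReal.ofReal (∫ x, g x ^ 2 ∂ν) := by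
    rw [ofReal_integral_eq_lintegral_ofReal hg_int2
      (Filter.Eventually.of_forall fun x => sq_nonneg _)]
    exact lintegral_congr fun x => enorm_sq_eq _
  have hLg_top : Lg ≠ ∞ := by rw [hLg_eq]; exact ENNReal.ofReal_ne_top
  have hLf_ne : Lf ≠ 0 := by
    intro h
    apply hfne
    rw [eLpNorm_two_eq, ← hLfdef, h]
    simp
  have hLg_ne : Lg ≠ 0 := by
    intro h
    rw [h, mul_zero] at hg_Lf
    exact hLf_ne (le_antisymm hg_Lf zero_le)
  -- level sets
  set A : ℝ → Set X := fun t => {x | t < g x ^ 2} with hAdef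
  have hgsq_meas : Measurable (fun x => g x ^ 2) := hg_meas.pow_const 2
  have hA_meas : ∀ t, MeasurableSet (A t) :=
    fun t => measurableSet_lt measurable_const hgsq_meas
  have hA_half : ∀ t, 0 < t → ν (A t) ≤ 1/2 := by
    intro t ht
    refine le_trans (measure_mono ?_) hg_level
    intro x hx
    simp only [hAdef, Set.mem_setOf_eq] at hx ⊢
    rcases lt_or_ge 0 (g x) with h | h
    · exact h
    · exfalso
      have : g x = 0 := le_antisymm h (hg_nonneg x)
      rw [this] at hx; norm_num at hx
      exact absurd hx (not_lt.mpr ht.le)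
  -- layer cake for A
  have hLayer : ∫⁻ t in Set.Ioi (0:ℝ), ν (A t) = Lg := by
    rw [← lintegral_eq_lintegral_meas_lt ν
      (Filter.Eventually.of_forall fun x => sq_nonneg (g x)) hgsq_meas.aemeasurable]
    exact (lintegral_congr fun x => (enorm_sq_eq _).symm)
  -- measurability of t ↦ ν (A t)
  have hEA : MeasurableSet {p : ℝ × X | p.1 < g p.2 ^ 2} :=
    measurableSet_lt measurable_fst (hgsq_meas.comp measurable_snd)
  have hνA_meas : Measurable (fun t => ν (A t)) := by
    have := measurable_measure_prodMk_left (ν := ν) hEA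
    exact this
  -- per-element bound
  have hD : ∀ s ∈ S, (∫⁻ t in Set.Ioi (0:ℝ), ν ((s • A t) \ A t))
      ≤ ENNReal.ofReal ε * 4 * Lg := by
    intro s hs
    set h : X → ℝ := fun x => g (s⁻¹ • x) with hhdef
    have hh_meas : Measurable h := hg_meas.comp (hmp s⁻¹).measurable
    have hE : MeasurableSet {p : ℝ × X | g p.2 ^ 2 ≤ p.1 ∧ p.1 < h p.2 ^ 2} := by
      refine MeasurableSet.inter ?_ ?_
      · exact measurableSet_le (hgsq_meas.comp measurable_snd) measurable_fst
      · exact measurableSet_lt measurable_fst ((hh_meas.pow_const 2).comp measurable_snd)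
    have hsec : ∀ t, (s • A t) \ A t
        = Prod.mk t ⁻¹' {p : ℝ × X | g p.2 ^ 2 ≤ p.1 ∧ p.1 < h p.2 ^ 2} := by
      intro t
      ext x
      simp only [hAdef, Set.mem_diff, Set.mem_smul_set_iff_inv_smul_mem, Set.mem_setOf_eq,
        Set.mem_preimage, not_lt, hhdef]
      tauto
    -- step 1: Fubini
    have step1 : (∫⁻ t in Set.Ioi (0:ℝ), ν ((s • A t) \ A t))
        ≤ ∫⁻ x, ENNReal.ofReal |h x ^ 2 - g x ^ 2| ∂ν := by
      calc (∫⁻ t in Set.Ioi (0:ℝ), ν ((s • A t) \ A t))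
          = ∫⁻ t in Set.Ioi (0:ℝ),
              ν (Prod.mk t ⁻¹' {p : ℝ × X | g p.2 ^ 2 ≤ p.1 ∧ p.1 < h p.2 ^ 2}) := by
            exact lintegral_congr fun t => by rw [hsec t]
        _ = ((volume.restrict (Set.Ioi (0:ℝ))).prod ν)
              {p : ℝ × X | g p.2 ^ 2 ≤ p.1 ∧ p.1 < h p.2 ^ 2} :=
            (Measure.prod_apply hE).symm
        _ = ∫⁻ x, (volume.restrict (Set.Ioi (0:ℝ)))
              ((fun t => (t, x)) ⁻¹' {p : ℝ × X | g p.2 ^ 2 ≤ p.1 ∧ p.1 < h p.2 ^ 2}) ∂ν :=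
            Measure.prod_apply_symm hE
        _ ≤ ∫⁻ x, ENNReal.ofReal |h x ^ 2 - g x ^ 2| ∂ν := by
            refine lintegral_mono fun x => ?_
            have hpre : ((fun t => (t, x)) ⁻¹'
                {p : ℝ × X | g p.2 ^ 2 ≤ p.1 ∧ p.1 < h p.2 ^ 2})
                = Set.Ico (g x ^ 2) (h x ^ 2) := by
              ext t; simp [Set.mem_Ico, and_comm]
            rw [hpre]
            calc (volume.restrict (Set.Ioi (0:ℝ))) (Set.Ico (g x ^ 2) (h x ^ 2))
                ≤ volume (Set.Ico (g x ^ 2) (h x ^ 2)) := Measure.restrict_apply_le _ _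
              _ = ENNReal.ofReal (h x ^ 2 - g x ^ 2) := Real.volume_Ico
              _ ≤ ENNReal.ofReal |h x ^ 2 - g x ^ 2| :=
                  ENNReal.ofReal_le_ofReal (le_abs_self _)
    -- step 2: Cauchy-Schwarz
    have step2 : (∫⁻ x, ENNReal.ofReal |h x ^ 2 - g x ^ 2| ∂ν)
        ≤ eLpNorm (fun x => h x - g x) 2 ν * eLpNorm (fun x => h x + g x) 2 ν := by
      have hptw : ∀ x, ENNReal.ofReal |h x ^ 2 - g x ^ 2|
          = ((fun x => (‖h x - g x‖₊ : ℝ≥0∞)) * fun x => (‖h x + g x‖₊ : ℝ≥0∞)) x := by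
        intro x
        simp only [Pi.mul_apply]
        rw [← enorm_eq_nnnorm, ← enorm_eq_nnnorm, Real.enorm_eq_ofReal_abs, Real.enorm_eq_ofReal_abs,
          ← ENNReal.ofReal_mul (abs_nonneg _), ← abs_mul]
        congr 1
        ring_nf
      calc (∫⁻ x, ENNReal.ofReal |h x ^ 2 - g x ^ 2| ∂ν)
          = ∫⁻ x, ((fun x => (‖h x - g x‖₊ : ℝ≥0∞)) * fun x => (‖h x + g x‖₊ : ℝ≥0∞)) x ∂ν :=
            lintegral_congr hptw
        _ ≤ (∫⁻ x, (‖h x - g x‖₊ : ℝ≥0∞) ^ (2:ℝ) ∂ν) ^ (1/2:ℝ)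
              * (∫⁻ x, (‖h x + g x‖₊ : ℝ≥0∞) ^ (2:ℝ) ∂ν) ^ (1/2:ℝ) :=
            ENNReal.lintegral_mul_le_Lp_mul_Lq ν Real.HolderConjugate.two_two
              (hh_meas.sub hg_meas).nnnorm.coe_nnreal_ennreal.aemeasurable
              (hh_meas.add hg_meas).nnnorm.coe_nnreal_ennreal.aemeasurable
        _ = eLpNorm (fun x => h x - g x) 2 ν * eLpNorm (fun x => h x + g x) 2 ν := by
            rw [eLpNorm_two_eq, eLpNorm_two_eq]
    -- norms of h
    have hLh : (∫⁻ x, (‖h x‖₊ : ℝ≥0∞) ^ (2:ℝ) ∂ν) = Lg := by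
      rw [hLgdef]
      exact (hmp s⁻¹).lintegral_comp (hg_meas.nnnorm.coe_nnreal_ennreal.pow measurable_const)
    have hNh : eLpNorm h 2 ν = eLpNorm g 2 ν := by
      rw [eLpNorm_two_eq, eLpNorm_two_eq, hLh, hLgdef]
    -- bound the first factor
    have hfac1 : eLpNorm (fun x => h x - g x) 2 ν ≤ ENNReal.ofReal ε * Lf ^ (1/2:ℝ) := by
      have := eLpNorm_mono (g := fun x => f (s⁻¹ • x) - f x) (p := 2) (μ := ν)
        (f := fun x => h x - g x) (fun x => by
          rw [Real.norm_eq_abs, Real.norm_eq_abs]; exact hg_lip s x)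
      refine le_trans this (le_trans (hfbd s hs) ?_)
      rw [eLpNorm_two_eq, ← hLfdef]
    -- bound the second factor
    have hfac2 : eLpNorm (fun x => h x + g x) 2 ν ≤ 2 * Lg ^ (1/2:ℝ) := by
      calc eLpNorm (fun x => h x + g x) 2 ν
          ≤ eLpNorm h 2 ν + eLpNorm g 2 ν :=
            eLpNorm_add_le hh_meas.aestronglyMeasurable hg_meas.aestronglyMeasurable one_le_two
        _ = 2 * Lg ^ (1/2:ℝ) := by
            rw [hNh, eLpNorm_two_eq, ← hLgdef, two_mul]
    -- Lf^(1/2) ≤ 2 * Lg^(1/2)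
    have hNf_le : Lf ^ (1/2:ℝ) ≤ 2 * Lg ^ (1/2:ℝ) := by
      calc Lf ^ (1/2:ℝ) ≤ (2 * Lg) ^ (1/2:ℝ) :=
            ENNReal.rpow_le_rpow hg_Lf (by norm_num)
        _ = 2 ^ (1/2:ℝ) * Lg ^ (1/2:ℝ) :=
            ENNReal.mul_rpow_of_nonneg _ _ (by norm_num)
        _ ≤ 2 ^ (1:ℝ) * Lg ^ (1/2:ℝ) := by
            gcongr
            · exact one_le_two
            · norm_num
        _ = 2 * Lg ^ (1/2:ℝ) := by rw [ENNReal.rpow_one]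
    -- combine
    have hhalf : Lg ^ (1/2:ℝ) * Lg ^ (1/2:ℝ) = Lg := by
      rw [← ENNReal.rpow_add _ _ hLg_ne hLg_top]
      norm_num
    calc (∫⁻ t in Set.Ioi (0:ℝ), ν ((s • A t) \ A t))
        ≤ eLpNorm (fun x => h x - g x) 2 ν * eLpNorm (fun x => h x + g x) 2 ν :=
          le_trans step1 step2
      _ ≤ (ENNReal.ofReal ε * Lf ^ (1/2:ℝ)) * (2 * Lg ^ (1/2:ℝ)) :=
          mul_le_mul' hfac1 hfac2
      _ ≤ (ENNReal.ofReal ε * (2 * Lg ^ (1/2:ℝ))) * (2 * Lg ^ (1/2:ℝ)) := by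
          gcongr
      _ = ENNReal.ofReal ε * 4 * (Lg ^ (1/2:ℝ) * Lg ^ (1/2:ℝ)) := by ring
      _ = ENNReal.ofReal ε * 4 * Lg := by rw [hhalf]
  -- measurability of the difference measures
  have hνD_meas : ∀ s : G, Measurable (fun t => ν ((s • A t) \ A t)) := by
    intro s
    have hE : MeasurableSet {p : ℝ × X | g p.2 ^ 2 ≤ p.1 ∧ p.1 < g (s⁻¹ • p.2) ^ 2} := by
      refine MeasurableSet.inter ?_ ?_
      · exact measurableSet_le (hgsq_meas.comp measurable_snd) measurable_fst
      · exact measurableSet_lt measurable_fst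
          ((hgsq_meas.comp ((hmp s⁻¹).measurable)).comp measurable_snd)
    have hsec : ∀ t, (s • A t) \ A t
        = Prod.mk t ⁻¹' {p : ℝ × X | g p.2 ^ 2 ≤ p.1 ∧ p.1 < g (s⁻¹ • p.2) ^ 2} := by
      intro t
      ext x
      simp only [hAdef, Set.mem_diff, Set.mem_smul_set_iff_inv_smul_mem, Set.mem_setOf_eq,
        Set.mem_preimage, not_lt]
      tauto
    simp_rw [hsec]
    exact measurable_measure_prodMk_left hE
  -- pointwise inequality in t, then integrate
  have hpt : ∀ t ∈ Set.Ioi (0:ℝ),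
      ν (A t) + ENNReal.ofReal α * ν (A t)
        ≤ ν (A t) + ∑ s ∈ S, ν ((s • A t) \ A t) := by
    intro t ht
    have h1 : ENNReal.ofReal (1 + α) * ν (A t) ≤ ν (⋃ s ∈ S, s • A t) :=
      hexp (A t) (hA_meas t) (hA_half t ht)
    have h2 : (⋃ s ∈ S, s • A t) ⊆ A t ∪ ⋃ s ∈ S, ((s • A t) \ A t) := by
      intro x hx
      obtain ⟨s, hs, hxs⟩ := Set.mem_iUnion₂.mp hx
      by_cases hxA : x ∈ A t
      · exact Or.inl hxA
      · exact Or.inr (Set.mem_biUnion hs ⟨hxs, hxA⟩)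
    calc ν (A t) + ENNReal.ofReal α * ν (A t)
        = ENNReal.ofReal (1 + α) * ν (A t) := by
          rw [ENNReal.ofReal_add zero_le_one hα.le, ENNReal.ofReal_one, add_mul, one_mul]
      _ ≤ ν (⋃ s ∈ S, s • A t) := h1
      _ ≤ ν (A t ∪ ⋃ s ∈ S, ((s • A t) \ A t)) := measure_mono h2
      _ ≤ ν (A t) + ν (⋃ s ∈ S, ((s • A t) \ A t)) := measure_union_le _ _
      _ ≤ ν (A t) + ∑ s ∈ S, ν ((s • A t) \ A t) := by
          exact add_le_add_right (measure_biUnion_finset_le S _) _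
  have hint : Lg + ENNReal.ofReal α * Lg
      ≤ Lg + ∑ s ∈ S, ∫⁻ t in Set.Ioi (0:ℝ), ν ((s • A t) \ A t) := by
    have hmono : ∫⁻ t in Set.Ioi (0:ℝ), (ν (A t) + ENNReal.ofReal α * ν (A t))
        ≤ ∫⁻ t in Set.Ioi (0:ℝ), (ν (A t) + ∑ s ∈ S, ν ((s • A t) \ A t)) := by
      refine lintegral_mono_ae ?_
      filter_upwards [ae_restrict_mem measurableSet_Ioi] with t ht
      exact hpt t ht
    rw [lintegral_add_left hνA_meas, lintegral_add_left hνA_meas,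
      lintegral_const_mul' _ _ ENNReal.ofReal_ne_top,
      lintegral_finset_sum S (fun s _ => hνD_meas s), hLayer] at hmono
    exact hmono
  have hmain : ENNReal.ofReal α * Lg ≤ ENNReal.ofReal ε * 4 * Lg * S.card := by
    have h1 := (ENNReal.add_le_add_iff_left hLg_top).mp hint
    refine le_trans h1 ?_
    calc ∑ s ∈ S, ∫⁻ t in Set.Ioi (0:ℝ), ν ((s • A t) \ A t)
        ≤ ∑ _s ∈ S, ENNReal.ofReal ε * 4 * Lg := Finset.sum_le_sum hD
      _ = ENNReal.ofReal ε * 4 * Lg * S.card := by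
          rw [Finset.sum_const, nsmul_eq_mul, mul_comm]
  -- derive contradiction
  have hcancel : ENNReal.ofReal α ≤ ENNReal.ofReal ε * 4 * S.card := by
    have : ENNReal.ofReal α * Lg ≤ ENNReal.ofReal ε * 4 * (S.card : ℝ≥0∞) * Lg := by
      calc ENNReal.ofReal α * Lg ≤ ENNReal.ofReal ε * 4 * Lg * S.card := hmain
        _ = ENNReal.ofReal ε * 4 * (S.card : ℝ≥0∞) * Lg := by ring
    exact (ENNReal.mul_le_mul_iff_left hLg_ne hLg_top).mp this
  have : (α : ℝ) ≤ ε * 4 * S.card := by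
    have h2 : ENNReal.ofReal ε * 4 * S.card = ENNReal.ofReal (ε * 4 * S.card) := by
      rw [ENNReal.ofReal_mul (by positivity), ENNReal.ofReal_mul (by positivity)]
      congr 1
      · congr 1
        rw [ENNReal.ofReal_ofNat]
      · rw [ENNReal.ofReal_natCast]
    rw [h2] at hcancel
    exact (ENNReal.ofReal_le_ofReal_iff (by positivity)).mp hcancel
  rw [hεdef] at this
  have hc : (S.card:ℝ) ≠ 0 := ne_of_gt hcard
  have hfin : α / (8 * (S.card:ℝ)) * 4 * (S.card:ℝ) = α / 2 := by
    rw [div_mul_eq_mul_div, div_mul_eq_mul_div,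
      div_eq_div_iff (by positivity) (by norm_num : (2:ℝ) ≠ 0)]
    ring
  rw [hfin] at this
  linarith


set_option maxHeartbeats 1000000 in
/-- Let `G` act on a probability space preserving the measure, `S ⊆ G` finite symmetric
with `1 ∈ S`, and `Γ = ⟨S⟩`.  The restricted action of `Γ` is expanding in measure if and
only if there is `ε > 0` such that `(S,ε)` is a Kazhdan pair for the representation of
`G` on `L²_0(X)`: no nonzero zero-average `f ∈ L²` satisfies `‖s·f − f‖₂ ≤ ε‖f‖₂` for
all `s ∈ S`. -/
theorem expanding_iff_kazhdan_pair
    {G X : Type*} [Group G] [MulAction G X] [MeasurableSpace X]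
    (ν : Measure X) [IsProbabilityMeasure ν]
    (hmp : ∀ g : G, MeasurePreserving (fun x => g • x) ν ν)
    (S : Finset G) (hS1 : (1 : G) ∈ S) (hSsymm : ∀ s ∈ S, s⁻¹ ∈ S) :
    (∃ α : ℝ, 0 < α ∧ ∀ A : Set X, MeasurableSet A → ν A ≤ 1 / 2 →
        ENNReal.ofReal (1 + α) * ν A ≤ ν (⋃ s ∈ S, s • A))
      ↔ ∃ ε : ℝ, 0 < ε ∧ ¬ ∃ f : X → ℝ,
          MemLp f 2 ν ∧ (∫ x, f x ∂ν = 0) ∧ eLpNorm f 2 ν ≠ 0 ∧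
          ∀ s ∈ S, eLpNorm (fun x => f (s⁻¹ • x) - f x) 2 ν
            ≤ ENNReal.ofReal ε * eLpNorm f 2 ν := by
  constructor
  · rintro ⟨α, hα, hexp⟩
    exact hard_dir ν hmp S hS1 hSsymm α hα hexp
  · rintro ⟨ε, hε, hK⟩
    by_contra hexp
    push_neg at hexp
    apply hK
    obtain ⟨A, hA, hA2, hAlt⟩ := hexp (ε^2/8) (by positivity)
    set α : ℝ := ε^2/8 with hαdef
    have hA0 : ν A ≠ 0 := by
      intro h
      rw [h, mul_zero] at hAlt
      exact absurd hAlt (not_lt.mpr zero_le)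
    have hAtop : ν A ≠ ∞ := measure_ne_top ν A
    set c : ℝ := (ν A).toReal with hcdef
    have hcpos : 0 < c := ENNReal.toReal_pos hA0 hAtop
    have hchalf : c ≤ 1/2 := by
      have := ENNReal.toReal_mono (by norm_num : (1/2 : ℝ≥0∞) ≠ ∞) hA2
      simpa using this
    set f : X → ℝ := fun x => A.indicator 1 x - c with hfdef
    have h_ind_meas : Measurable (A.indicator (1 : X → ℝ)) :=
      measurable_one.indicator hA
    have hf_meas : Measurable f := h_ind_meas.sub measurable_const
    have hf_aesm : AEStronglyMeasurable f ν := hf_meas.aestronglyMeasurable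
    -- pointwise values
    have hf_mem : ∀ x ∈ A, f x = 1 - c := by
      intro x hx; simp [hfdef, Set.indicator_of_mem hx]
    have hf_nmem : ∀ x ∉ A, f x = -c := by
      intro x hx; simp [hfdef, Set.indicator_of_notMem hx]
    have hMemLp : MemLp f 2 ν := by
      refine MemLp.of_bound hf_aesm 2 (Filter.Eventually.of_forall fun x => ?_)
      rw [Real.norm_eq_abs, abs_le]
      by_cases hx : x ∈ A
      · rw [hf_mem x hx]; constructor <;> linarith
      · rw [hf_nmem x hx]; constructor <;> linarith
    have hInt : ∫ x, f x ∂ν = 0 := by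
      have h1 : Integrable (A.indicator (1 : X → ℝ)) ν :=
        (integrable_const (1:ℝ)).indicator hA
      rw [hfdef]
      rw [integral_sub h1 (integrable_const c), integral_indicator_one hA, integral_const]
      simp [hcdef, Measure.real]
    have hNe : eLpNorm f 2 ν ≠ 0 := by
      rw [ne_eq, eLpNorm_eq_zero_iff hf_aesm two_ne_zero]
      intro h
      have hnull : ν {x | ¬ (f x = 0)} = 0 := ae_iff.mp h
      have hsub : A ⊆ {x | ¬ (f x = 0)} := by
        intro x hx
        simp only [Set.mem_setOf_eq]
        rw [hf_mem x hx]
        intro hc; apply absurd hchalf; push_neg; linarith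
      exact hA0 (measure_mono_null hsub hnull)
    -- lower bound on L2 norm of f
    set Lf : ℝ≥0∞ := ∫⁻ x, (‖f x‖₊ : ℝ≥0∞) ^ (2:ℝ) ∂ν with hLf
    have hLf_lb : ENNReal.ofReal (1/4) * ν A ≤ Lf := by
      have hpt : ∀ x, A.indicator (fun _ => ENNReal.ofReal (1/4)) x
          ≤ (‖f x‖₊ : ℝ≥0∞) ^ (2:ℝ) := by
        intro x
        by_cases hx : x ∈ A
        · rw [Set.indicator_of_mem hx, enorm_sq_eq]
          apply ENNReal.ofReal_le_ofReal
          rw [hf_mem x hx]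
          nlinarith
        · rw [Set.indicator_of_notMem hx]; exact zero_le
      calc ENNReal.ofReal (1/4) * ν A
          = ∫⁻ x, A.indicator (fun _ => ENNReal.ofReal (1/4)) x ∂ν := by
            rw [lintegral_indicator_const hA]
        _ ≤ Lf := lintegral_mono hpt
    refine ⟨f, hMemLp, hInt, hNe, fun s hs => ?_⟩
    -- the difference function
    have hsA : MeasurableSet (s • A) := by
      rw [smul_set_eq_preimage]; exact (hmp s⁻¹).measurable hA
    have hd_eq : ∀ x, f (s⁻¹ • x) - f x = (s • A).indicator 1 x - A.indicator 1 x := by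
      intro x
      have : A.indicator (1 : X → ℝ) (s⁻¹ • x) = (s • A).indicator 1 x := by
        by_cases hx : x ∈ s • A
        · rw [Set.indicator_of_mem hx,
            Set.indicator_of_mem (Set.mem_smul_set_iff_inv_smul_mem.mp hx)]
          rfl
        · rw [Set.indicator_of_notMem hx, Set.indicator_of_notMem
            (fun hc => hx (Set.mem_smul_set_iff_inv_smul_mem.mpr hc))]
      simp only [hfdef, this]; ring
    -- bound on the symmetric difference
    have key : ∀ u ∈ S, ν (u • A \ A) < ENNReal.ofReal α * ν A := by
      intro u hu
      have huA : MeasurableSet (u • A) := by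
        rw [smul_set_eq_preimage]; exact (hmp u⁻¹).measurable hA
      have h1 : ν A + ν (u • A \ A) = ν (A ∪ u • A) := measure_add_diff hA.nullMeasurableSet _
      have h2 : A ∪ u • A ⊆ ⋃ v ∈ S, v • A := by
        apply Set.union_subset
        · intro x hx
          exact Set.mem_biUnion hS1 (by rwa [one_smul])
        · exact fun x hx => Set.mem_biUnion hu hx
      have h3 : ν A + ν (u • A \ A) < ν A + ENNReal.ofReal α * ν A := by
        rw [h1]
        calc ν (A ∪ u • A) ≤ ν (⋃ v ∈ S, v • A) := measure_mono h2
          _ < ENNReal.ofReal (1 + α) * ν A := hAlt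
          _ = ν A + ENNReal.ofReal α * ν A := by
              rw [ENNReal.ofReal_add zero_le_one (by positivity), ENNReal.ofReal_one, add_mul,
                one_mul]
      exact (ENNReal.add_lt_add_iff_left hAtop).mp h3
    have hdiff1 : ν (s • A \ A) < ENNReal.ofReal α * ν A := key s hs
    have hdiff2 : ν (A \ s • A) < ENNReal.ofReal α * ν A := by
      have hpre : (fun x => s • x) ⁻¹' (A \ s • A) = s⁻¹ • A \ A := by
        rw [Set.preimage_diff, smul_set_eq_preimage s⁻¹ A, inv_inv]
        congr 1
        ext x
        simp [Set.mem_smul_set_iff_inv_smul_mem]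
      have := (hmp s).measure_preimage (hA.diff hsA).nullMeasurableSet
      rw [hpre] at this
      rw [← this]
      exact key s⁻¹ (hSsymm s hs)
    -- bound the L2 norm of the difference
    have hLd : ∫⁻ x, (‖f (s⁻¹ • x) - f x‖₊ : ℝ≥0∞) ^ (2:ℝ) ∂ν
        ≤ ENNReal.ofReal (ε^2) * (ENNReal.ofReal (1/4) * ν A) := by
      have hpt : ∀ x, (‖f (s⁻¹ • x) - f x‖₊ : ℝ≥0∞) ^ (2:ℝ)
          ≤ ((s • A \ A) ∪ (A \ s • A)).indicator (fun _ => (1:ℝ≥0∞)) x := by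
        intro x
        rw [enorm_sq_eq, hd_eq x]
        by_cases hx1 : x ∈ s • A <;> by_cases hx2 : x ∈ A
        · simp [Set.indicator_of_mem hx1, Set.indicator_of_mem hx2, hx1, hx2]
        · have hxm : x ∈ (s • A \ A) ∪ (A \ s • A) := Or.inl ⟨hx1, hx2⟩
          simp [Set.indicator_of_mem hx1, Set.indicator_of_notMem hx2,
            Set.indicator_of_mem hxm]
        · have hxm : x ∈ (s • A \ A) ∪ (A \ s • A) := Or.inr ⟨hx2, hx1⟩
          simp [Set.indicator_of_notMem hx1, Set.indicator_of_mem hx2,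
            Set.indicator_of_mem hxm]
        · have hxm : x ∉ (s • A \ A) ∪ (A \ s • A) := by
            rintro (⟨h, _⟩ | ⟨h, _⟩) <;> [exact hx1 h; exact hx2 h]
          simp [Set.indicator_of_notMem hx1, Set.indicator_of_notMem hx2,
            Set.indicator_of_notMem hxm]
      calc ∫⁻ x, (‖f (s⁻¹ • x) - f x‖₊ : ℝ≥0∞) ^ (2:ℝ) ∂ν
          ≤ ∫⁻ x, ((s • A \ A) ∪ (A \ s • A)).indicator (fun _ => (1:ℝ≥0∞)) x ∂ν :=
            lintegral_mono hpt
        _ = ν ((s • A \ A) ∪ (A \ s • A)) := by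
            rw [lintegral_indicator_const ((hsA.diff hA).union (hA.diff hsA)), one_mul]
        _ ≤ ν (s • A \ A) + ν (A \ s • A) := measure_union_le _ _
        _ ≤ ENNReal.ofReal α * ν A + ENNReal.ofReal α * ν A :=
            add_le_add hdiff1.le hdiff2.le
        _ = ENNReal.ofReal (2 * α) * ν A := by
            rw [ENNReal.ofReal_mul (by norm_num : (0:ℝ) ≤ 2)]
            rw [ENNReal.ofReal_ofNat, two_mul, add_mul]
        _ = ENNReal.ofReal (ε^2) * (ENNReal.ofReal (1/4) * ν A) := by
            rw [← mul_assoc, ← ENNReal.ofReal_mul (by positivity)]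
            congr 2
            rw [hαdef]; ring
    -- conclude
    rw [eLpNorm_two_eq, eLpNorm_two_eq, ← hLf]
    calc (∫⁻ x, (‖f (s⁻¹ • x) - f x‖₊ : ℝ≥0∞) ^ (2:ℝ) ∂ν) ^ (1/2:ℝ)
        ≤ (ENNReal.ofReal (ε^2) * Lf) ^ (1/2:ℝ) := by
          apply ENNReal.rpow_le_rpow _ (by norm_num)
          exact le_trans hLd (mul_le_mul_right hLf_lb _)
      _ = ENNReal.ofReal ε * Lf ^ (1/2:ℝ) := by
          rw [ENNReal.mul_rpow_of_nonneg _ _ (by norm_num : (0:ℝ) ≤ 1/2)]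
          congr 1
          rw [ENNReal.ofReal_pow hε.le, rpow_half_sq]
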